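/- (Half-duplex region is contained in the full-duplex region.) If d1 ≥ 0, d2 ≥ 0 and there exists α ∈ [0,1] with d1 ≤ α·d1max and d2 ≤ (1−α)·d2max, then d1 ≤ d1max, d2 ≤ d2max, and d1 + d2 ≤ d_sum. -/
import Mathlib


open MeasureTheory Set

/-- Real-valued Lebesgue measure of a set of reals. -/
noncomputable def μr (S : Set ℝ) : ℝ := (volume S).toReal

lemma μr_nonneg (S : Set ℝ) : 0 ≤ μr S := ENNReal.toReal_nonneg

lemma μr_subadd {S T : Set ℝ} (hS : S ⊆ Icc (-1) 1) (hT : T ⊆ Icc (-1) 1) :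
    μr S ≤ μr (S \ T) + μr T := by
  have hfin : volume (Icc (-1 : ℝ) 1) < ⊤ := measure_Icc_lt_top
  have h1 : volume (S \ T) ≠ ⊤ :=
    ((measure_mono (fun x hx => hS hx.1)).trans_lt hfin).ne
  have h2 : volume T ≠ ⊤ := ((measure_mono hT).trans_lt hfin).ne
  have h3 : volume S ≤ volume (S \ T) + volume T := by
    calc volume S ≤ volume ((S \ T) ∪ T) := measure_mono (fun x hx => by
          by_cases h : x ∈ T
          · exact Or.inr h
          · exact Or.inl ⟨hx, h⟩)
      _ ≤ volume (S \ T) + volume T := measure_union_le _ _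
  have := ENNReal.toReal_mono (by simp [ENNReal.add_ne_top, h1, h2]) h3
  rwa [ENNReal.toReal_add h1 h2] at this

theorem half_duplex_in_full_duplex
    (L_T1 L_R1 L_T2 L_R2 : ℝ)
    (hLT1 : 0 ≤ L_T1) (hLR1 : 0 ≤ L_R1) (hLT2 : 0 ≤ L_T2) (hLR2 : 0 ≤ L_R2)
    (ΨT11 ΨT12 ΨT22 ΨR11 ΨR12 ΨR22 : Set ℝ)
    (hmT11 : MeasurableSet ΨT11) (hmT12 : MeasurableSet ΨT12)
    (hmT22 : MeasurableSet ΨT22) (hmR11 : MeasurableSet ΨR11)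
    (hmR12 : MeasurableSet ΨR12) (hmR22 : MeasurableSet ΨR22)
    (hsT11 : ΨT11 ⊆ Icc (-1) 1) (hsT12 : ΨT12 ⊆ Icc (-1) 1)
    (hsT22 : ΨT22 ⊆ Icc (-1) 1) (hsR11 : ΨR11 ⊆ Icc (-1) 1)
    (hsR12 : ΨR12 ⊆ Icc (-1) 1) (hsR22 : ΨR22 ⊆ Icc (-1) 1)
    (d1max d2max dsum d1 d2 : ℝ)
    (hd1max : d1max = 2 * min (L_T1 * μr ΨT11) (L_R1 * μr ΨR11))
    (hd2max : d2max = 2 * min (L_T2 * μr ΨT22) (L_R2 * μr ΨR22))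
    (hdsum : dsum = 2 * L_T2 * μr (ΨT22 \ ΨT12) + 2 * L_R1 * μr (ΨR11 \ ΨR12)
        + 2 * max (L_T2 * μr ΨT12) (L_R1 * μr ΨR12))
    (hd1 : 0 ≤ d1) (hd2 : 0 ≤ d2)
    (hα : ∃ α : ℝ, 0 ≤ α ∧ α ≤ 1 ∧ d1 ≤ α * d1max ∧ d2 ≤ (1 - α) * d2max)
    :
    d1 ≤ d1max ∧ d2 ≤ d2max ∧ d1 + d2 ≤ dsum := by
  obtain ⟨α, hα0, hα1, hd1α, hd2α⟩ := hα
  have h1max0 : 0 ≤ d1max := by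
    rw [hd1max]
    have := mul_nonneg hLT1 (μr_nonneg ΨT11)
    have := mul_nonneg hLR1 (μr_nonneg ΨR11)
    positivity
  have h2max0 : 0 ≤ d2max := by
    rw [hd2max]
    have := mul_nonneg hLT2 (μr_nonneg ΨT22)
    have := mul_nonneg hLR2 (μr_nonneg ΨR22)
    positivity
  have H1 : d1 ≤ d1max := hd1α.trans (by nlinarith)
  have H2 : d2 ≤ d2max := hd2α.trans (by nlinarith)
  refine ⟨H1, H2, ?_⟩
  -- d1max ≤ dsum and d2max ≤ dsum
  have hR : μr ΨR11 ≤ μr (ΨR11 \ ΨR12) + μr ΨR12 := μr_subadd hsR11 hsR12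
  have hT : μr ΨT22 ≤ μr (ΨT22 \ ΨT12) + μr ΨT12 := μr_subadd hsT22 hsT12
  have hmax1 : L_R1 * μr ΨR12 ≤ max (L_T2 * μr ΨT12) (L_R1 * μr ΨR12) := le_max_right _ _
  have hmax2 : L_T2 * μr ΨT12 ≤ max (L_T2 * μr ΨT12) (L_R1 * μr ΨR12) := le_max_left _ _
  have hA : d1max ≤ dsum := by
    rw [hd1max, hdsum]
    have h1 : min (L_T1 * μr ΨT11) (L_R1 * μr ΨR11) ≤ L_R1 * μr ΨR11 := min_le_right _ _
    have h2 : L_R1 * μr ΨR11 ≤ L_R1 * (μr (ΨR11 \ ΨR12) + μr ΨR12) :=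
      mul_le_mul_of_nonneg_left hR hLR1
    have h3 : 0 ≤ L_T2 * μr (ΨT22 \ ΨT12) := mul_nonneg hLT2 (μr_nonneg _)
    nlinarith
  have hB : d2max ≤ dsum := by
    rw [hd2max, hdsum]
    have h1 : min (L_T2 * μr ΨT22) (L_R2 * μr ΨR22) ≤ L_T2 * μr ΨT22 := min_le_left _ _
    have h2 : L_T2 * μr ΨT22 ≤ L_T2 * (μr (ΨT22 \ ΨT12) + μr ΨT12) :=
      mul_le_mul_of_nonneg_left hT hLT2
    have h3 : 0 ≤ L_R1 * μr (ΨR11 \ ΨR12) := mul_nonneg hLR1 (μr_nonneg _)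
    nlinarith
  nlinarith [mul_le_mul_of_nonneg_left hA hα0, mul_le_mul_of_nonneg_left hB (by linarith : (0:ℝ) ≤ 1 - α)]
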